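/- Let M be a real m×n matrix, B ∈ ℝ^m a target coefficient vector, and let the column index set {1,…,n} be partitioned into K pairwise disjoint blocks S_1,…,S_K whose union is all of {1,…,n}. Suppose α*, α ∈ ℝ^n are vectors such that ‖M·α* − B‖₁ ≤ ε₁ (the error of the approximate solution of the global linear system) and for each i ∈ {1,…,K} one has Σ_{j ∈ S_i} |α_j − α*_j| ≤ ε₂^i (the error of the i-th localized mixed equation system). Then the total compilation error satisfies ‖M·α − B‖₁ ≤ ‖M‖₁ · (Σ_{i=1}^{K} ε₂^i) + ε₁, where ‖M‖₁ denotes the operator norm of M induced by the L1 vector norm (the maximum absolute column sum of M). -/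
import Mathlib


/-- **Error bound of the compilation process.**
`M` is the real `m × n` matrix governing the global linear equation system,
`B` the target coefficient vector, and the columns `Fin n` are partitioned
into `K` pairwise disjoint blocks `S 1, …, S K` covering all columns.
If `‖M ⬝ α* − B‖₁ ≤ ε₁` and each localized block error satisfies
`∑ j ∈ S i, |α j − α* j| ≤ ε₂ i`, then
`‖M ⬝ α − B‖₁ ≤ ‖M‖₁ ⋅ (∑ i, ε₂ i) + ε₁`, where `‖M‖₁` is the operator norm
induced by the L1 vector norm, i.e. the maximum absolute column sum. -/
theorem compilation_error_bound
    (m n K : ℕ)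
    (M : Matrix (Fin m) (Fin n) ℝ) (B : Fin m → ℝ)
    (S : Fin K → Finset (Fin n))
    (hdisj : ∀ i j : Fin K, i ≠ j → Disjoint (S i) (S j))
    (hcover : Finset.univ.biUnion S = (Finset.univ : Finset (Fin n)))
    (αstar α : Fin n → ℝ) (ε₁ : ℝ) (ε₂ : Fin K → ℝ)
    (hlin : ∑ i, |(M.mulVec αstar - B) i| ≤ ε₁)
    (hloc : ∀ i : Fin K, ∑ j ∈ S i, |α j - αstar j| ≤ ε₂ i) :
    ∑ i, |(M.mulVec α - B) i| ≤
      (⨆ j : Fin n, ∑ i, |M i j|) * (∑ i, ε₂ i) + ε₁ := by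
  set C := ⨆ j : Fin n, ∑ i, |M i j| with hC
  have hcol : ∀ j : Fin n, ∑ i, |M i j| ≤ C := fun j =>
    le_ciSup (f := fun j : Fin n => ∑ i, |M i j|) (Set.Finite.bddAbove (Set.finite_range _)) j
  -- sum of block errors bounds total L1 distance
  have hsum : ∑ j, |α j - αstar j| ≤ ∑ i, ε₂ i := by
    calc ∑ j, |α j - αstar j|
        = ∑ j ∈ Finset.univ.biUnion S, |α j - αstar j| := by rw [hcover]
      _ = ∑ i, ∑ j ∈ S i, |α j - αstar j| :=
          Finset.sum_biUnion (fun i _ j _ hij => hdisj i j hij)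
      _ ≤ ∑ i, ε₂ i := Finset.sum_le_sum fun i _ => hloc i
  have h1 : ∀ i : Fin m, |(M.mulVec α - B) i| ≤
      |(M.mulVec (α - αstar)) i| + |(M.mulVec αstar - B) i| := by
    intro i
    have : (M.mulVec α - B) i = (M.mulVec (α - αstar)) i + (M.mulVec αstar - B) i := by
      simp only [Matrix.mulVec, dotProduct, Pi.sub_apply, mul_sub,
        Finset.sum_sub_distrib]
      ring
    rw [this]
    exact abs_add_le _ _
  have habs : ∑ i, |(M.mulVec (α - αstar)) i| ≤ C * ∑ j, |α j - αstar j| := by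
    calc ∑ i, |(M.mulVec (α - αstar)) i|
        ≤ ∑ i, ∑ j, |M i j * (α j - αstar j)| := by
          simp only [Matrix.mulVec, dotProduct, Pi.sub_apply]
          exact Finset.sum_le_sum fun i _ => Finset.abs_sum_le_sum_abs _ _
      _ = ∑ j, (∑ i, |M i j|) * |α j - αstar j| := by
          rw [Finset.sum_comm]
          simp [abs_mul, Finset.sum_mul]
      _ ≤ ∑ j, C * |α j - αstar j| :=
          Finset.sum_le_sum fun j _ => mul_le_mul_of_nonneg_right (hcol j) (abs_nonneg _)
      _ = C * ∑ j, |α j - αstar j| := by rw [Finset.mul_sum]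
  have hCnonneg : 0 ≤ C := by
    rcases Nat.eq_zero_or_pos n with hn | hn
    · subst hn
      simp [hC, ciSup_of_empty]
    · obtain ⟨j⟩ : Nonempty (Fin n) := ⟨⟨0, hn⟩⟩
      exact le_trans (Finset.sum_nonneg fun i _ => abs_nonneg _) (hcol j)
  calc ∑ i, |(M.mulVec α - B) i|
      ≤ ∑ i, (|(M.mulVec (α - αstar)) i| + |(M.mulVec αstar - B) i|) :=
        Finset.sum_le_sum fun i _ => h1 i
    _ = (∑ i, |(M.mulVec (α - αstar)) i|) + ∑ i, |(M.mulVec αstar - B) i| :=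
        Finset.sum_add_distrib
    _ ≤ C * (∑ j, |α j - αstar j|) + ε₁ := add_le_add habs hlin
    _ ≤ C * (∑ i, ε₂ i) + ε₁ := by
        have := mul_le_mul_of_nonneg_left hsum hCnonneg
        linarith
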